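/- For a field R and n ≥ 2, the range of the embedding θ ↦ M_n(θ,R) from preorders on Fin n to subrings of Matrix (Fin n) (Fin n) R is order-convex: if M_n(θ₁,R) ⊆ N ⊆ M_n(θ₂,R) for preorders θ₁, θ₂ and a subring N, then N = M_n(θ,R) for some preorder θ. -/

import Mathlib

theorem structural_matrix_ring_range_order_convex
    (R : Type*) [Field R] (n : ℕ) (hn : 2 ≤ n)
    (θ₁ θ₂ : Fin n → Fin n → Prop)
    (h₁r : Reflexive θ₁) (h₁t : Transitive θ₁)
    (h₂r : Reflexive θ₂) (h₂t : Transitive θ₂)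
    (N : Subring (Matrix (Fin n) (Fin n) R))
    (h₁ : {A : Matrix (Fin n) (Fin n) R | ∀ i j, A i j ≠ 0 → θ₁ i j} ⊆ (N : Set _))
    (h₂ : (N : Set (Matrix (Fin n) (Fin n) R)) ⊆
        {A | ∀ i j, A i j ≠ 0 → θ₂ i j}) :
    ∃ θ : Fin n → Fin n → Prop, Reflexive θ ∧ Transitive θ ∧
      (N : Set (Matrix (Fin n) (Fin n) R)) =
        {A | ∀ i j, A i j ≠ 0 → θ i j} := by
  classical
  -- all diagonal matrices lie in N
  have hdiag : ∀ d : Fin n → R, Matrix.diagonal d ∈ N := by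
    intro d
    apply h₁
    intro i j hij
    by_cases h : i = j
    · subst h; exact h₁r i
    · exact absurd (Matrix.diagonal_apply_ne d h) hij
  have hEii : ∀ i : Fin n, Matrix.single i i (1 : R) ∈ N := by
    intro i
    apply h₁
    intro a b hab
    by_cases h : i = a ∧ i = b
    · obtain ⟨rfl, rfl⟩ := h; exact h₁r _
    · exact absurd (Matrix.single_apply_of_ne i i 1 a b h) hab
  refine ⟨fun i j => Matrix.single i j (1 : R) ∈ N, hEii, ?_, ?_⟩
  · intro i j k hij hjk
    have := N.mul_mem hij hjk
    rwa [Matrix.single_mul_single_same, one_mul] at this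
  · ext A
    constructor
    · -- A ∈ N → supp A ⊆ θ
      intro hA i j hij
      show Matrix.single i j (1 : R) ∈ N
      have hmem : Matrix.diagonal (fun _ => (A i j)⁻¹) *
          (Matrix.single i i (1 : R) * A * Matrix.single j j (1 : R)) ∈ N :=
        N.mul_mem (hdiag _) (N.mul_mem (N.mul_mem (hEii i) hA) (hEii j))
      have heq : Matrix.diagonal (fun _ => (A i j)⁻¹) *
          (Matrix.single i i (1 : R) * A * Matrix.single j j (1 : R)) =
          Matrix.single i j (1 : R) := by
        ext a b
        rw [Matrix.diagonal_mul]
        by_cases ha : a = i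
        · subst ha
          by_cases hb : b = j
          · subst hb
            simp [inv_mul_cancel₀ hij]
          · rw [Matrix.mul_single_apply_of_ne _ _ _ _ _ hb,
              Matrix.single_apply_of_col_ne _ _ (fun h => hb h.symm)]
            simp
        · rw [mul_assoc, Matrix.single_mul_apply_of_ne (c := 1) i i a b ha,
            Matrix.single_apply_of_row_ne (fun h => ha h.symm), mul_zero]
      rw [← heq]; exact hmem
    · intro hA
      show A ∈ N
      rw [Matrix.matrix_eq_sum_single A]
      apply N.sum_mem
      intro i _
      apply N.sum_mem
      intro j _
      by_cases hij : A i j = 0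
      · rw [hij, Matrix.single_zero]; exact N.zero_mem
      · have hE : Matrix.single i j (1 : R) ∈ N := hA i j hij
        have : Matrix.diagonal (fun _ => A i j) * Matrix.single i j (1 : R) =
            Matrix.single i j (A i j) := by
          ext a b
          rw [Matrix.diagonal_mul]
          by_cases h : i = a ∧ j = b
          · obtain ⟨rfl, rfl⟩ := h; simp
          · rw [Matrix.single_apply_of_ne _ _ _ _ _ h,
              Matrix.single_apply_of_ne _ _ _ _ _ h, mul_zero]
        rw [← this]
        exact N.mul_mem (hdiag _) hE
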